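/- If a function f : X → Y between real vector spaces satisfies f(2x+y) + f(2x−y) = 4[f(x+y) + f(x−y)] + 2[f(2x) − 4f(x)] − 6f(y) for all x, y ∈ X, then the map g defined by g(x) = f(2x) − 16f(x) is quadratic, i.e., g(x+y) + g(x−y) = 2g(x) + 2g(y) for all x, y ∈ X. -/
import Mathlib


theorem stmt_2 {X Y : Type*} [AddCommGroup X] [Module ℝ X] [AddCommGroup Y] [Module ℝ Y]
    (f : X → Y)
    (hf : ∀ x y : X, f ((2:ℝ) • x + y) + f ((2:ℝ) • x - y) =
      (4:ℝ) • (f (x + y) + f (x - y)) + (2:ℝ) • (f ((2:ℝ) • x) - (4:ℝ) • f x) - (6:ℝ) • f y)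
    (g : X → Y) (hg : ∀ x : X, g x = f ((2:ℝ) • x) - (16:ℝ) • f x) :
    ∀ x y : X, g (x + y) + g (x - y) = (2:ℝ) • g x + (2:ℝ) • g y := by
  have h0 : f 0 = 0 := by
    have h := hf 0 0
    simp only [smul_zero, add_zero, sub_zero] at h
    have h6 : (6:ℝ) • f 0 = 0 := by linear_combination (norm := module) h
    have := smul_eq_zero.mp h6
    simpa using this
  have heven : ∀ y : X, f (-y) = f y := by
    intro y
    have h := hf 0 y
    simp only [smul_zero, zero_add, zero_sub, h0] at h
    have h3 : (3:ℝ) • f (-y) = (3:ℝ) • f y := by linear_combination (norm := module) - h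
    have := smul_right_injective Y (by norm_num : (3:ℝ) ≠ 0) h3
    exact this
  intro x y
  have h2 := hf x ((2:ℝ) • y)
  have h3 := hf y x
  -- rewrite arguments in h3
  have e1 : (2:ℝ) • y + x = x + (2:ℝ) • y := by abel
  have e2 : f ((2:ℝ) • y - x) = f (x - (2:ℝ) • y) := by
    rw [show (2:ℝ) • y - x = -(x - (2:ℝ) • y) by abel, heven]
  have e3 : y + x = x + y := by abel
  have e4 : f (y - x) = f (x - y) := by
    rw [show y - x = -(x - y) by abel, heven]
  rw [e1, e2, e3, e4] at h3
  rw [hg, hg, hg, hg, smul_add, smul_sub]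
  linear_combination (norm := module) h2 + (4:ℝ) • h3
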